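/- Let x be a valid integral allocation satisfying category stability (CS) with V(x) > 0. Then there exist a category c and an agent a with x_{a,c} = 1 such that a is the highest-priority agent of c, i.e., a ≽_c a' for every a' ∈ E_c. -/

import Mathlib

open Finset

/-- An allocation instance: quotas, eligibility sets, and priority relations. -/
structure AllocInstance (A C : Type*) where
  quota : C → ℕ
  elig : C → Set A
  prio : C → A → A → Prop

namespace AllocInstance

variable {A C : Type*} [Fintype A] [Fintype C]

/-- Strict priority: `a ≻_c a'`. -/
def Strict (I : AllocInstance A C) (c : C) (a a' : A) : Prop :=
  I.prio c a a' ∧ ¬ I.prio c a' a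

/-- The priority relation of each category is a total preorder on its eligible set. -/
def TotalPreorder (I : AllocInstance A C) : Prop :=
  (∀ c, ∀ a ∈ I.elig c, I.prio c a a) ∧
  (∀ c, ∀ a ∈ I.elig c, ∀ a' ∈ I.elig c, ∀ a'' ∈ I.elig c,
      I.prio c a a' → I.prio c a' a'' → I.prio c a a'') ∧
  (∀ c, ∀ a ∈ I.elig c, ∀ a' ∈ I.elig c, I.prio c a a' ∨ I.prio c a' a)

/-- The priority relation of each category is a (strict) total order on its eligible
set, i.e. an antisymmetric total preorder. -/
def StrictTotalPrio (I : AllocInstance A C) : Prop :=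
  I.TotalPreorder ∧
  (∀ c, ∀ a ∈ I.elig c, ∀ a' ∈ I.elig c, I.prio c a a' → I.prio c a' a → a = a')

/-- A feasible allocation: nonnegative, eligibility (ER), quotas (QR), unit demand. -/
def Feasible (I : AllocInstance A C) (x : A → C → ℝ) : Prop :=
  (∀ a c, 0 ≤ x a c) ∧
  (∀ a c, a ∉ I.elig c → x a c = 0) ∧
  (∀ c, ∑ a, x a c ≤ (I.quota c : ℝ)) ∧
  (∀ a, ∑ c, x a c ≤ 1)

/-- The size of an allocation. -/
def V (_I : AllocInstance A C) (x : A → C → ℝ) : ℝ := ∑ a, ∑ c, x a c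

/-- Respect for priorities (PR). -/
def PR (I : AllocInstance A C) (x : A → C → ℝ) : Prop :=
  ∀ c, ∀ a ∈ I.elig c, ∀ a' ∈ I.elig c,
    I.Strict c a' a → 0 < x a c → ∑ c', x a' c' = 1

/-- Pareto efficiency (PE). -/
def PE (I : AllocInstance A C) (x : A → C → ℝ) : Prop :=
  ¬ ∃ y, I.Feasible y ∧ I.PR y ∧
    (∀ a, ∑ c, x a c ≤ ∑ c, y a c) ∧ (∃ a, ∑ c, x a c < ∑ c, y a c)

/-- A valid allocation: feasible, respecting priorities, and Pareto efficient. -/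
def Valid (I : AllocInstance A C) (x : A → C → ℝ) : Prop :=
  I.Feasible x ∧ I.PR x ∧ I.PE x

/-- An integral allocation. -/
def Integral (_I : AllocInstance A C) (x : A → C → ℝ) : Prop :=
  ∀ a c, x a c = 0 ∨ x a c = 1

/-- A valid perturbation profile: positivity, small effect, consistency. -/
def ValidPerturbation (I : AllocInstance A C) (δ : A → C → ℝ) : Prop :=
  (∀ a c, 0 < δ a c) ∧
  (∑ a, ∑ c, δ a c ≤ 1 / 2) ∧
  (∀ c, ∀ a ∈ I.elig c, ∀ a' ∈ I.elig c, (I.prio c a a' ↔ δ a' c ≥ δ a c))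

/-- The perturbed objective `V_δ`. -/
def Vd (_I : AllocInstance A C) (δ x : A → C → ℝ) : ℝ :=
  ∑ a, ∑ c, x a c * (1 - δ a c)

/-- Category stability (CS): no cyclic trade among categories in which some category
passes its allocation to a strictly higher-priority agent. -/
def CS (I : AllocInstance A C) (x : A → C → ℝ) : Prop :=
  ¬ ∃ (j : ℕ) (c : ℕ → C) (a : ℕ → A),
      2 ≤ j ∧ c j = c 0 ∧ a j = a 0 ∧
      (∀ i < j, 0 < x (a i) (c i) ∧ I.prio (c i) (a (i + 1)) (a i)) ∧
      (∃ i < j, I.Strict (c i) (a (i + 1)) (a i))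

end AllocInstance

/-- a nonempty valid integral allocation satisfying CS allocates,
from some category, to that category's highest-priority agent. -/
theorem stmt12 {A C : Type*} [Fintype A] [Fintype C] (I : AllocInstance A C)
    (hord : I.StrictTotalPrio)
    (x : A → C → ℝ) (hval : I.Valid x) (hint : I.Integral x) (hcs : I.CS x)
    (hpos : 0 < I.V x) :
    ∃ (c : C) (a : A), x a c = 1 ∧ a ∈ I.elig c ∧ ∀ a' ∈ I.elig c, I.prio c a a' := by
  obtain ⟨⟨hnn, her, hq, hud⟩, hpr, hpe⟩ := hval
  by_contra hcon
  push_neg at hcon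
  obtain ⟨⟨hrefl, htrans, htot⟩, hanti⟩ := hord
  -- every allocated pair steps to a strictly-higher-priority allocated pair
  have step : ∀ p : A × C, x p.1 p.2 = 1 →
      ∃ q : A × C, x q.1 q.2 = 1 ∧ I.Strict p.2 q.1 p.1 := by
    intro p hp
    have hel : p.1 ∈ I.elig p.2 := by
      by_contra h; rw [her _ _ h] at hp; norm_num at hp
    obtain ⟨a', ha'el, ha'⟩ := hcon p.2 p.1 hp hel
    have hstrict : I.Strict p.2 a' p.1 := by
      refine ⟨?_, ha'⟩
      rcases htot p.2 p.1 hel a' ha'el with h | h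
      · exact absurd h ha'
      · exact h
    have hsum : ∑ c', x a' c' = 1 :=
      hpr p.2 p.1 hel a' ha'el hstrict (by rw [hp]; norm_num)
    have hex : ∃ c', x a' c' = 1 := by
      by_contra h; push_neg at h
      have hz : ∀ c' ∈ Finset.univ, x a' c' = 0 :=
        fun c' _ => (hint a' c').resolve_right (h c')
      rw [Finset.sum_eq_zero hz] at hsum; norm_num at hsum
    obtain ⟨c', hc'⟩ := hex
    exact ⟨(a', c'), hc', hstrict⟩
  -- a starting allocated pair
  have hstart : ∃ p : A × C, x p.1 p.2 = 1 := by
    by_contra h; push_neg at h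
    have hz : ∀ a c, x a c = 0 := fun a c => (hint a c).resolve_right (h (a, c))
    simp only [AllocInstance.V, hz, Finset.sum_const_zero] at hpos
    exact lt_irrefl _ hpos
  obtain ⟨p0, hp0⟩ := hstart
  -- iterate the step
  set S := {p : A × C // x p.1 p.2 = 1} with hS
  have step' : ∀ p : S, ∃ q : S, I.Strict p.1.2 q.1.1 p.1.1 := by
    intro ⟨p, hp⟩
    obtain ⟨q, hq, hqs⟩ := step p hp
    exact ⟨⟨q, hq⟩, hqs⟩
  choose F hF using step'
  set f : ℕ → S := fun n => F^[n] ⟨p0, hp0⟩ with hf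
  have hfs : ∀ n : ℕ, I.Strict (f n).1.2 (f (n + 1)).1.1 (f n).1.1 := by
    intro n
    have : f (n + 1) = F (f n) := by
      simp only [hf, Function.iterate_succ_apply']
    rw [this]; exact hF (f n)
  -- pigeonhole
  obtain ⟨m, n, hmn, hfeq⟩ := Finite.exists_ne_map_eq_of_infinite f
  wlog hlt : m < n generalizing m n
  · exact this n m hmn.symm hfeq.symm (by omega)
  set j := n - m with hj
  have hjn : m + j = n := by omega
  have hj1 : 1 ≤ j := by omega
  have hj2 : 2 ≤ j := by
    rcases Nat.lt_or_ge j 2 with h | h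
    · exfalso
      have hj1' : j = 1 := by omega
      have : f (m + 1) = f m := by rw [← hj1', hjn, hfeq]
      have hs := hfs m
      rw [this] at hs
      exact hs.2 hs.1
    · exact h
  refine hcs ⟨j, fun i => (f (m + i)).1.2, fun i => (f (m + i)).1.1, hj2, ?_, ?_, ?_, ?_⟩
  · show ((f (m + j)).1).2 = ((f (m + 0)).1).2
    rw [hjn, Nat.add_zero, hfeq]
  · show ((f (m + j)).1).1 = ((f (m + 0)).1).1
    rw [hjn, Nat.add_zero, hfeq]
  · intro i hi
    refine ⟨by rw [(f (m + i)).2]; norm_num, ?_⟩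
    simpa [Nat.add_assoc] using (hfs (m + i)).1
  · exact ⟨0, by omega, by simpa using hfs (m + 0)⟩
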